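/- Let (Ω, F, P) be a probability space, h : Ω → ℝ integrable, and a ∈ ℝ. Suppose φ ∈ C₀ satisfies φ(ω) = 1 whenever h(ω) < a and φ(ω) = 0 whenever h(ω) > a, and let φ' ∈ C₀ satisfy E[φ'] ≥ E[φ]. Then ∫ (a − h)(φ − φ') dP ≥ 0, and consequently E[h | φ] ≤ E[h | φ'], i.e., E[h·φ]/E[φ] ≤ E[h·φ']/E[φ']. -/

import Mathlib

open MeasureTheory

/-- a threshold criterion `φ` (accept when `h < a`, reject when `h > a`)
has the smallest conditional average score among criteria with at least its acceptance
probability. -/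
theorem stmt_12 {Ω : Type*} [MeasurableSpace Ω] (P : Measure Ω) [IsProbabilityMeasure P]
    (h : Ω → ℝ) (hh : Integrable h P) (a : ℝ)
    (φ φ' : Ω → ℝ) (hφm : Measurable φ) (hφ'm : Measurable φ')
    (hφ01 : ∀ ω, φ ω ∈ Set.Icc (0 : ℝ) 1) (hφ'01 : ∀ ω, φ' ω ∈ Set.Icc (0 : ℝ) 1)
    (hφpos : 0 < ∫ ω, φ ω ∂P) (hφ'pos : 0 < ∫ ω, φ' ω ∂P)
    (h1 : ∀ ω, h ω < a → φ ω = 1) (h0 : ∀ ω, a < h ω → φ ω = 0)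
    (hge : ∫ ω, φ ω ∂P ≤ ∫ ω, φ' ω ∂P) :
    0 ≤ ∫ ω, (a - h ω) * (φ ω - φ' ω) ∂P ∧
    (∫ ω, h ω * φ ω ∂P) / (∫ ω, φ ω ∂P) ≤ (∫ ω, h ω * φ' ω ∂P) / (∫ ω, φ' ω ∂P) := by
  have hφint : Integrable φ P := by
    apply Integrable.mono' (integrable_const (1 : ℝ)) hφm.aestronglyMeasurable
    filter_upwards with ω
    rw [Real.norm_eq_abs, abs_le]
    exact ⟨by linarith [(hφ01 ω).1], (hφ01 ω).2⟩
  have hφ'int : Integrable φ' P := by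
    apply Integrable.mono' (integrable_const (1 : ℝ)) hφ'm.aestronglyMeasurable
    filter_upwards with ω
    rw [Real.norm_eq_abs, abs_le]
    exact ⟨by linarith [(hφ'01 ω).1], (hφ'01 ω).2⟩
  have hhφ : Integrable (fun ω => h ω * φ ω) P := by
    have e : (fun ω => h ω * φ ω) = fun ω => φ ω * h ω := funext fun ω => mul_comm _ _
    rw [e]
    exact hh.bdd_mul hφm.aestronglyMeasurable
      (c := 1) (Filter.Eventually.of_forall fun ω => by rw [Real.norm_eq_abs, abs_le]; exact ⟨by linarith [(hφ01 ω).1], (hφ01 ω).2⟩)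
  have hhφ' : Integrable (fun ω => h ω * φ' ω) P := by
    have e : (fun ω => h ω * φ' ω) = fun ω => φ' ω * h ω := funext fun ω => mul_comm _ _
    rw [e]
    exact hh.bdd_mul hφ'm.aestronglyMeasurable
      (c := 1) (Filter.Eventually.of_forall fun ω => by rw [Real.norm_eq_abs, abs_le]; exact ⟨by linarith [(hφ'01 ω).1], (hφ'01 ω).2⟩)
  have key : 0 ≤ ∫ ω, (a - h ω) * (φ ω - φ' ω) ∂P := by
    apply integral_nonneg
    intro ω
    rcases lt_trichotomy (h ω) a with hlt | heq | hgt
    · have := h1 ω hlt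
      apply mul_nonneg (by linarith)
      rw [this]; linarith [(hφ'01 ω).2]
    · simp [heq]
    · have := h0 ω hgt
      show 0 ≤ (a - h ω) * (φ ω - φ' ω)
      rw [this]
      nlinarith [(hφ'01 ω).1]
  refine ⟨key, ?_⟩
  have hexp : ∫ ω, (a - h ω) * (φ ω - φ' ω) ∂P
      = a * (∫ ω, φ ω ∂P) - a * (∫ ω, φ' ω ∂P)
        - ((∫ ω, h ω * φ ω ∂P) - (∫ ω, h ω * φ' ω ∂P)) := by
    have e1 : ∫ ω, (a - h ω) * (φ ω - φ' ω) ∂P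
        = ∫ ω, (a * φ ω - a * φ' ω) - (h ω * φ ω - h ω * φ' ω) ∂P := by
      congr 1; funext ω; ring
    have i1 : Integrable (fun ω => a * φ ω - a * φ' ω) P :=
      (hφint.const_mul a).sub (hφ'int.const_mul a)
    have i2 : Integrable (fun ω => h ω * φ ω - h ω * φ' ω) P := hhφ.sub hhφ'
    rw [e1, integral_sub i1 i2,
      integral_sub (hφint.const_mul a) (hφ'int.const_mul a), integral_sub hhφ hhφ',
      integral_const_mul, integral_const_mul]
  have hca : ∫ ω, h ω * φ ω ∂P ≤ a * ∫ ω, φ ω ∂P := by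
    rw [← integral_const_mul a φ]
    apply integral_mono hhφ (hφint.const_mul a)
    intro ω
    rcases le_or_gt (h ω) a with hle | hgt
    · exact mul_le_mul_of_nonneg_right hle (hφ01 ω).1
    · simp [h0 ω hgt]
  rw [div_le_div_iff₀ hφpos hφ'pos]
  nlinarith [key, hexp, hca, hge, hφpos, hφ'pos]
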